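/- If the order ∅([F] ++ S) coincides with ∅S for a lexicographic revision sequence S = [S_1,…,S_m], then for any formula S_0, the order ∅([F, S_0] ++ S) coincides with ∅([S_0] ++ S). That is, redundancy of the first revision is preserved when a new revision is inserted immediately after it. -/
import Mathlib


/-- Propositional formulas over variables of type `α`. -/
inductive PropForm (α : Type) : Type
  | var : α → PropForm α
  | tru : PropForm α
  | fls : PropForm α
  | neg : PropForm α → PropForm α
  | conj : PropForm α → PropForm α → PropForm α
  | disj : PropForm α → PropForm α → PropForm α

namespace PropForm
/-- Evaluation of a formula in a valuation (model). -/
def eval {α : Type} (v : α → Bool) : PropForm α → Bool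
  | var a => v a
  | tru => true
  | fls => false
  | neg f => !(eval v f)
  | conj f g => eval v f && eval v g
  | disj f g => eval v f || eval v g
end PropForm

/-- A model `I` satisfies formula `A`. -/
def Sat {α : Type} (I : α → Bool) (A : PropForm α) : Prop := PropForm.eval I A = true

/-- The order induced by a single formula: `I ≤_A J` iff `I ⊨ A` or `J ⊭ A`. -/
def leA {α : Type} (A : PropForm α) (I J : α → Bool) : Prop := Sat I A ∨ ¬ Sat J A

/-- Auxiliary: the order generated from the flat state by a revision sequence given
in reverse order (most recent revision first). -/
def leSeqRev {α : Type} (I J : α → Bool) : List (PropForm α) → Prop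
  | [] => True
  | A :: S' => leA A I J ∧ (¬ leA A J I ∨ leSeqRev I J S')

/-- `I ≤_{∅S} J`: the order generated from the flat state by the sequence `S` of
lexicographic revisions (given in chronological order, so the last element of `S`
is the most recent revision).  It satisfies `leSeq [] I J ↔ True` and
`leSeq (S' ++ [A]) I J ↔ leA A I J ∧ (¬ leA A J I ∨ leSeq S' I J)`. -/
def leSeq {α : Type} (S : List (PropForm α)) (I J : α → Bool) : Prop :=
  leSeqRev I J S.reverse

/-- `I ≡_{∅S} J`: equivalence of models in the order generated by `S`. -/
def equivSeq {α : Type} (S : List (PropForm α)) (I J : α → Bool) : Prop :=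
  leSeq S I J ∧ leSeq S J I


def eqRevAux {α : Type} (I J : α → Bool) (L : List (PropForm α)) : Prop :=
  ∀ A ∈ L, leA A I J ∧ leA A J I

lemma leSeqRev_append {α : Type} (I J : α → Bool) (L X : List (PropForm α)) :
    leSeqRev I J (L ++ X) ↔ leSeqRev I J L ∧ (eqRevAux I J L → leSeqRev I J X) := by
  induction L with
  | nil => simp [leSeqRev, eqRevAux]
  | cons A L ih =>
      have hE : eqRevAux I J (A :: L) ↔ (leA A I J ∧ leA A J I) ∧ eqRevAux I J L := by
        simp [eqRevAux]
      rw [List.cons_append]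
      show leA A I J ∧ (¬ leA A J I ∨ leSeqRev I J (L ++ X)) ↔
        (leA A I J ∧ (¬ leA A J I ∨ leSeqRev I J L)) ∧ (eqRevAux I J (A :: L) → leSeqRev I J X)
      rw [ih, hE]
      tauto

/-- STATEMENT 13: redundancy of the first revision is preserved when a new revision
is inserted immediately after it. -/
theorem redundancy_insert_after {α : Type} (F : PropForm α) (S : List (PropForm α))
    (h : ∀ I J : α → Bool, leSeq (F :: S) I J ↔ leSeq S I J) (S0 : PropForm α) :
    ∀ I J : α → Bool, leSeq (F :: S0 :: S) I J ↔ leSeq (S0 :: S) I J := by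
  intro I J
  have key : leSeqRev I J S.reverse → eqRevAux I J S.reverse → leA F I J := by
    intro hP hE
    have h2 : leSeq (F :: S) I J := (h I J).mpr hP
    rw [leSeq, List.reverse_cons, leSeqRev_append] at h2
    exact (h2.2 hE).1
  simp only [leSeq, List.reverse_cons, List.append_assoc, List.cons_append, List.nil_append,
    leSeqRev_append, leSeqRev]
  constructor
  · rintro ⟨hP, hX⟩
    exact ⟨hP, fun hE => ⟨(hX hE).1, Or.inr trivial⟩⟩
  · rintro ⟨hP, hX⟩
    exact ⟨hP, fun hE => ⟨(hX hE).1, Or.inr ⟨key hP hE, Or.inr trivial⟩⟩⟩
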